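/- Let X be a random variable with a ≤ X ≤ b almost surely for real numbers a < b, and let X_1, …, X_m be i.i.d. copies of X with empirical mean X̄_m = (1/m) Σ_{i=1}^m X_i and empirical variance V̄_m = (1/m) Σ_{i=1}^m (X_i - X̄_m)². Then for any x > 0, P( V̄_m ≤ V[X] + sqrt( 2 V[X] (b-a)² x / m ) + x (b-a)² / (3m) ) ≥ 1 - exp(-x), where V[X] denotes the variance of X. -/

import Mathlib

open MeasureTheory ProbabilityTheory Real

lemma fact_ge : ∀ n : ℕ, 2 * 3 ^ n ≤ Nat.factorial (n + 2) := by
  intro n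
  induction n with
  | zero => simp [Nat.factorial]
  | succ k ih =>
      have : Nat.factorial (k + 3) = (k + 3) * Nat.factorial (k + 2) := rfl
      rw [this]
      calc 2 * 3 ^ (k + 1) = 3 * (2 * 3 ^ k) := by ring
        _ ≤ 3 * Nat.factorial (k + 2) := by exact Nat.mul_le_mul_left 3 ih
        _ ≤ (k + 3) * Nat.factorial (k + 2) := Nat.mul_le_mul_right _ (by omega)

set_option maxHeartbeats 1000000 in
lemma exp_bound3 {u : ℝ} (hu0 : 0 ≤ u) (hu3 : u < 3) :
    Real.exp u ≤ 1 + u + u ^ 2 / (2 * (1 - u / 3)) := by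
  have hexp : Real.exp u = ∑' n : ℕ, u ^ n / n.factorial := by
    have h := congrFun Real.exp_eq_exp_ℝ u
    rw [h, NormedSpace.exp_eq_tsum_div]
  have hsum : Summable (fun n : ℕ => u ^ n / n.factorial) :=
    Real.summable_pow_div_factorial u
  have hsum1 : Summable (fun n : ℕ => u ^ (n + 1) / (n + 1).factorial) :=
    (summable_nat_add_iff 1).2 hsum
  have hsum2 : Summable (fun n : ℕ => u ^ (n + 2) / (n + 2).factorial) :=
    (summable_nat_add_iff 2).2 hsum
  have h1 : Real.exp u = 1 + (u + ∑' n : ℕ, u ^ (n + 2) / (n + 2).factorial) := by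
    rw [hexp, Summable.tsum_eq_zero_add hsum]
    simp only [pow_zero, Nat.factorial_zero]
    rw [Summable.tsum_eq_zero_add hsum1]
    norm_num
  have hr : 0 ≤ u / 3 := by linarith
  have hr1 : u / 3 < 1 := by linarith
  have hgeo : Summable (fun n : ℕ => u ^ 2 / 2 * (u / 3) ^ n) :=
    (summable_geometric_of_lt_one hr hr1).mul_left _
  have hterm : ∀ n : ℕ, u ^ (n + 2) / (n + 2).factorial ≤ u ^ 2 / 2 * (u / 3) ^ n := by
    intro n
    have hf : (2 * 3 ^ n : ℝ) ≤ ((n + 2).factorial : ℝ) := by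
      exact_mod_cast fact_ge n
    rw [div_le_iff₀ (by positivity : (0:ℝ) < ((n+2).factorial : ℝ))]
    calc u ^ (n + 2) = (u ^ 2 / 2 * (u / 3) ^ n) * (2 * 3 ^ n) := by
          rw [div_pow]; field_simp; ring
      _ ≤ u ^ 2 / 2 * (u / 3) ^ n * ((n + 2).factorial : ℝ) := by
          apply mul_le_mul_of_nonneg_left hf (by positivity)
  have htsum : ∑' n : ℕ, u ^ (n + 2) / (n + 2).factorial ≤
      ∑' n : ℕ, u ^ 2 / 2 * (u / 3) ^ n := Summable.tsum_le_tsum hterm hsum2 hgeo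
  have hgeoval : ∑' n : ℕ, u ^ 2 / 2 * (u / 3) ^ n = u ^ 2 / 2 * (1 - u / 3)⁻¹ := by
    rw [tsum_mul_left, tsum_geometric_of_lt_one hr hr1]
  rw [h1]
  have : u ^ 2 / 2 * (1 - u / 3)⁻¹ = u ^ 2 / (2 * (1 - u / 3)) := by
    field_simp
  linarith [htsum.trans_eq (hgeoval.trans this)]

lemma sum_sq_min (f : ℕ → ℝ) (m : ℕ) (hm : 0 < m) (c : ℝ) :
    ∑ i ∈ Finset.range m, (f i - (∑ j ∈ Finset.range m, f j) / m) ^ 2 ≤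
      ∑ i ∈ Finset.range m, (f i - c) ^ 2 := by
  set s := ∑ j ∈ Finset.range m, f j with hs
  have hm0 : (m : ℝ) ≠ 0 := Nat.cast_ne_zero.2 hm.ne'
  have key : ∀ d : ℝ, ∑ i ∈ Finset.range m, (f i - d) ^ 2
      = ∑ i ∈ Finset.range m, f i ^ 2 - 2 * d * s + m * d ^ 2 := by
    intro d
    have : ∀ i ∈ Finset.range m, (f i - d) ^ 2 = f i ^ 2 - 2 * d * f i + d ^ 2 := by
      intro i _; ring
    rw [Finset.sum_congr rfl this, Finset.sum_add_distrib, Finset.sum_sub_distrib,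
      ← Finset.mul_sum, Finset.sum_const, Finset.card_range, nsmul_eq_mul]
  rw [key, key]
  have h2 : 0 ≤ (m:ℝ) * (s / m - c) ^ 2 := by positivity
  have : (m:ℝ) * (s / m - c) ^ 2 = (- 2 * c * s + m * c ^2) - (- 2 * (s/m) * s + m * (s/m)^2) := by
    field_simp
    ring
  linarith [this ▸ h2]
/-- Empirical mean of the first `m` of the random variables `X i`. -/
noncomputable def empMean {Ω : Type*} (X : ℕ → Ω → ℝ) (m : ℕ) (ω : Ω) : ℝ :=
  (∑ i ∈ Finset.range m, X i ω) / m

/-- Empirical variance of the first `m` of the random variables `X i`. -/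
noncomputable def empVar {Ω : Type*} (X : ℕ → Ω → ℝ) (m : ℕ) (ω : Ω) : ℝ :=
  (∑ i ∈ Finset.range m, (X i ω - empMean X m ω) ^ 2) / m

set_option maxHeartbeats 2000000 in
/-- high-probability upper bound on the empirical variance in
terms of the true variance. -/
theorem stmt_11 {Ω : Type*} {mΩ : MeasurableSpace Ω} (P : Measure Ω)
    [IsProbabilityMeasure P] (a b : ℝ) (hab : a < b) (X : ℕ → Ω → ℝ)
    (hmeas : ∀ i, Measurable (X i))
    (hindep : iIndepFun X P)
    (hident : ∀ i, IdentDistrib (X i) (X 0) P P)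
    (hbdd : ∀ i, ∀ᵐ ω ∂P, X i ω ∈ Set.Icc a b)
    (m : ℕ) (hm : 1 ≤ m) (x : ℝ) (hx : 0 < x) :
    ENNReal.ofReal (1 - Real.exp (-x)) ≤
      P {ω | empVar X m ω ≤ variance (X 0) P
        + Real.sqrt (2 * variance (X 0) P * (b - a) ^ 2 * x / m)
        + x * (b - a) ^ 2 / (3 * m)} := by
  classical
  have hmpos : (0:ℝ) < m := by exact_mod_cast hm
  have hm0 : 0 < m := hm
  set V := variance (X 0) P with hVdef
  set c₀ := (b - a) ^ 2 with hc₀def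
  have hba : (0:ℝ) < b - a := sub_pos.2 hab
  have hc₀pos : 0 < c₀ := by positivity
  set μ0 := ∫ ω, X 0 ω ∂P with hμ0def
  set Y : ℕ → Ω → ℝ := fun i ω => (X i ω - μ0) ^ 2 with hYdef
  set S : Ω → ℝ := fun ω => ∑ i ∈ Finset.range m, Y i ω with hSdef
  -- basic facts
  have hYmeas : ∀ i, Measurable (Y i) := fun i =>
    ((hmeas i).sub measurable_const).pow_const 2
  have hXint : ∀ i, Integrable (X i) P := by
    intro i
    refine Integrable.mono' (integrable_const (max |a| |b|))
      (hmeas i).aestronglyMeasurable ?_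
    filter_upwards [hbdd i] with ω hω
    rw [Real.norm_eq_abs]
    exact abs_le_max_abs_abs hω.1 hω.2
  have hμ0a : a ≤ μ0 := by
    have h := integral_mono_ae (integrable_const a) (hXint 0)
      ((hbdd 0).mono fun ω h => h.1)
    simpa using h
  have hμ0b : μ0 ≤ b := by
    have h := integral_mono_ae (hXint 0) (integrable_const b)
      ((hbdd 0).mono fun ω h => h.2)
    simpa using h
  have hYbdd : ∀ i, ∀ᵐ ω ∂P, Y i ω ∈ Set.Icc 0 c₀ := by
    intro i
    filter_upwards [hbdd i] with ω hω
    refine ⟨sq_nonneg _, ?_⟩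
    have h1 : -(b - a) ≤ X i ω - μ0 := by linarith [hω.1]
    have h2 : X i ω - μ0 ≤ b - a := by linarith [hω.2]
    exact sq_le_sq' h1 h2
  have hYint : ∀ i, Integrable (Y i) P := by
    intro i
    refine Integrable.mono' (integrable_const c₀) (hYmeas i).aestronglyMeasurable ?_
    filter_upwards [hYbdd i] with ω hω
    rw [Real.norm_eq_abs, abs_of_nonneg hω.1]
    exact hω.2
  have hX2 : MemLp (X 0) 2 P := by
    have htop : MemLp (X 0) ⊤ P := by
      refine memLp_top_of_bound (hmeas 0).aestronglyMeasurable (max |a| |b|) ?_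
      filter_upwards [hbdd 0] with ω hω
      rw [Real.norm_eq_abs]
      exact abs_le_max_abs_abs hω.1 hω.2
    exact htop.mono_exponent le_top
  have hEY : ∫ ω, Y 0 ω ∂P = V := (variance_eq_integral (hmeas 0).aemeasurable).symm
  have hYident : ∀ i, IdentDistrib (Y i) (Y 0) P P := fun i =>
    (hident i).comp ((measurable_id.sub measurable_const).pow_const 2)
  have hYindep : iIndepFun Y P :=
    hindep.comp (fun _ y => (y - μ0) ^ 2)
      (fun _ => (measurable_id.sub measurable_const).pow_const 2)
  have hEYi : ∀ i, ∫ ω, Y i ω ∂P = V := fun i =>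
    ((hYident i).integral_eq).trans hEY
  have hVnn : 0 ≤ V := variance_nonneg _ _
  set ε : ℝ := m * V + Real.sqrt (2 * (m * V * c₀) * x) + c₀ * x / 3 with hεdef
  set A : Set Ω := {ω | empVar X m ω ≤ V + Real.sqrt (2 * V * c₀ * x / m)
    + x * c₀ / (3 * m)} with hAdef
  have hsqrt_eq : Real.sqrt (2 * (m * V * c₀) * x)
      = m * Real.sqrt (2 * V * c₀ * x / m) := by
    rw [show 2 * ((m:ℝ) * V * c₀) * x = (m:ℝ) ^ 2 * (2 * V * c₀ * x / m) by
      field_simp, Real.sqrt_mul (sq_nonneg _), Real.sqrt_sq hmpos.le]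
  have hsub : Aᶜ ⊆ {ω | ε ≤ S ω} := by
    intro ω hω
    simp only [hAdef, Set.mem_compl_iff, Set.mem_setOf_eq, not_le] at hω
    have h1 : empVar X m ω ≤ S ω / m := by
      have h2 := sum_sq_min (fun i => X i ω) m hm0 μ0
      have h3 : empVar X m ω = (∑ i ∈ Finset.range m,
          (X i ω - (∑ j ∈ Finset.range m, X j ω) / m) ^ 2) / m := rfl
      rw [h3]
      exact (div_le_div_iff_of_pos_right hmpos).2 h2
    have h3 : V + Real.sqrt (2 * V * c₀ * x / m) + x * c₀ / (3 * m) < S ω / m :=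
      lt_of_lt_of_le hω h1
    rw [lt_div_iff₀ hmpos] at h3
    have h4 : (V + Real.sqrt (2 * V * c₀ * x / m) + x * c₀ / (3 * m)) * m
        = m * V + m * Real.sqrt (2 * V * c₀ * x / m) + c₀ * x / 3 := by
      field_simp
    rw [Set.mem_setOf_eq, hεdef, hsqrt_eq]
    linarith [h4 ▸ h3]
  suffices hP : P {ω | ε ≤ S ω} ≤ ENNReal.ofReal (Real.exp (-x)) by
    have hempmeas : Measurable (empVar X m) := by
      unfold empVar empMean
      exact (Finset.measurable_sum _ (fun i _ => ((hmeas i).sub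
        ((Finset.measurable_sum _ (fun j _ => hmeas j)).div_const _)).pow_const
        2)).div_const _
    have hA : MeasurableSet A := measurableSet_le hempmeas measurable_const
    have hc : P Aᶜ ≤ ENNReal.ofReal (Real.exp (-x)) := (measure_mono hsub).trans hP
    calc ENNReal.ofReal (1 - Real.exp (-x))
        = 1 - ENNReal.ofReal (Real.exp (-x)) := by
          rw [ENNReal.ofReal_sub _ (Real.exp_pos _).le, ENNReal.ofReal_one]
      _ ≤ 1 - P Aᶜ := tsub_le_tsub_left hc 1
      _ = P A := by
          rw [prob_compl_eq_one_sub hA,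
            ENNReal.sub_sub_cancel ENNReal.one_ne_top prob_le_one]
  rcases hVnn.eq_or_lt with hV0 | hVpos
  · -- degenerate case: variance is zero
    have hSnn : ∀ ω, 0 ≤ S ω := fun ω => Finset.sum_nonneg fun i _ => sq_nonneg _
    have hSint : Integrable S P := integrable_finset_sum _ (fun i _ => hYint i)
    have hES : ∫ ω, S ω ∂P = 0 := by
      rw [hSdef]
      rw [integral_finset_sum _ (fun i _ => hYint i)]
      simp [hEYi, ← hV0]
    have hS0 : ∀ᵐ ω ∂P, S ω = 0 :=
      (integral_eq_zero_iff_of_nonneg (fun ω => hSnn ω) hSint).1 hES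
    have hεpos : 0 < ε := by
      rw [hεdef, ← hV0]
      simp only [mul_zero, zero_mul, mul_zero, zero_add, Real.sqrt_zero]
      positivity
    have hnull : P {ω | ε ≤ S ω} = 0 := by
      refine measure_mono_null ?_ (ae_iff.1 hS0)
      intro ω hω
      simp only [Set.mem_setOf_eq] at hω ⊢
      intro h0
      rw [h0] at hω
      linarith
    rw [hnull]
    exact zero_le
  · -- main case: positive variance
    set v : ℝ := m * V * c₀ with hvdef
    have hvpos : 0 < v := mul_pos (mul_pos hmpos hVpos) hc₀pos
    set β : ℝ := Real.sqrt (2 * x / v) with hβdef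
    have hβpos : 0 < β := Real.sqrt_pos.2 (by positivity)
    have hβsq : β ^ 2 = 2 * x / v := Real.sq_sqrt (by positivity)
    set D : ℝ := 1 + c₀ / 3 * β with hDdef
    have hDpos : 0 < D := by positivity
    set lam : ℝ := β / D with hlamdef
    have hlampos : 0 < lam := div_pos hβpos hDpos
    have hlamc : lam * c₀ < 3 := by
      rw [hlamdef, div_mul_eq_mul_div, div_lt_iff₀ hDpos, hDdef]
      nlinarith
    have h1mlam : 1 - lam * c₀ / 3 = 1 / D := by
      rw [hlamdef]
      field_simp
      rw [hDdef]; ring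
    have hexpint : ∀ i, Integrable (fun ω => Real.exp (lam * Y i ω)) P := by
      intro i
      refine Integrable.mono' (integrable_const (Real.exp (lam * c₀)))
        (((hYmeas i).const_mul lam).exp).aestronglyMeasurable ?_
      filter_upwards [hYbdd i] with ω hω
      rw [Real.norm_eq_abs, Real.abs_exp]
      exact Real.exp_le_exp.2 (mul_le_mul_of_nonneg_left hω.2 hlampos.le)
    have hSmeas : Measurable S := by
      rw [hSdef]
      exact Finset.measurable_sum _ (fun i _ => hYmeas i)
    have hSexpint : Integrable (fun ω => Real.exp (lam * S ω)) P := by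
      refine Integrable.mono' (integrable_const (Real.exp (lam * (m * c₀))))
        ((hSmeas.const_mul lam).exp).aestronglyMeasurable ?_
      have hae : ∀ᵐ ω ∂P, ∀ i, Y i ω ∈ Set.Icc 0 c₀ := ae_all_iff.2 hYbdd
      filter_upwards [hae] with ω hω
      rw [Real.norm_eq_abs, Real.abs_exp]
      apply Real.exp_le_exp.2
      apply mul_le_mul_of_nonneg_left _ hlampos.le
      calc S ω ≤ ∑ _i ∈ Finset.range m, c₀ :=
            Finset.sum_le_sum (fun i _ => (hω i).2)
        _ = m * c₀ := by simp [mul_comm]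
    have hch := measure_ge_le_exp_mul_mgf (μ := P) (X := S) ε hlampos.le hSexpint
    have hmgfS : mgf S P lam = mgf (Y 0) P lam ^ m := by
      have hfun : S = ∑ i ∈ Finset.range m, Y i := by
        funext ω
        simp [hSdef, Finset.sum_apply]
      rw [hfun, hYindep.mgf_sum hYmeas]
      have hcongr : ∀ i ∈ Finset.range m, mgf (Y i) P lam = mgf (Y 0) P lam := by
        intro i _
        exact ((hYident i).comp ((measurable_id.const_mul lam).exp)).integral_eq
      rw [Finset.prod_congr rfl hcongr, Finset.prod_const, Finset.card_range]
    set E : ℝ := Real.exp (lam * c₀) with hEdef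
    have hmgf1 : mgf (Y 0) P lam ≤ 1 + V / c₀ * (E - 1) := by
      have hptw : ∀ᵐ ω ∂P, Real.exp (lam * Y 0 ω) ≤ 1 + Y 0 ω / c₀ * (E - 1) := by
        filter_upwards [hYbdd 0] with ω hω
        set θ := Y 0 ω / c₀ with hθdef
        have hθ0 : 0 ≤ θ := div_nonneg hω.1 hc₀pos.le
        have hθ1 : θ ≤ 1 := (div_le_one hc₀pos).2 hω.2
        have hcvx := convexOn_exp.2 (Set.mem_univ 0) (Set.mem_univ (lam * c₀))
          (by linarith : (0:ℝ) ≤ 1 - θ) hθ0 (by ring)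
        simp only [smul_eq_mul, mul_zero, zero_add, Real.exp_zero, mul_one] at hcvx
        have hθc : θ * (lam * c₀) = lam * Y 0 ω := by
          rw [hθdef]
          field_simp
        rw [hθc] at hcvx
        rw [hEdef]
        calc Real.exp (lam * Y 0 ω) ≤ (1 - θ) + θ * Real.exp (lam * c₀) := hcvx
          _ = 1 + θ * (Real.exp (lam * c₀) - 1) := by ring
      have hint2 : Integrable (fun ω => 1 + Y 0 ω / c₀ * (E - 1)) P :=
        (integrable_const 1).add (((hYint 0).div_const c₀).mul_const _)
      have hmono := integral_mono_ae (hexpint 0) hint2 hptw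
      calc mgf (Y 0) P lam = ∫ ω, Real.exp (lam * Y 0 ω) ∂P := rfl
        _ ≤ ∫ ω, (1 + Y 0 ω / c₀ * (E - 1)) ∂P := hmono
        _ = 1 + V / c₀ * (E - 1) := by
            rw [integral_add (integrable_const 1) (((hYint 0).div_const c₀).mul_const _),
              integral_const, integral_mul_const, integral_div, hEY]
            simp
    have hmgf2 : mgf (Y 0) P lam ≤ Real.exp (V / c₀ * (E - 1)) :=
      hmgf1.trans (by linarith [Real.add_one_le_exp (V / c₀ * (E - 1))])
    have hsqrt2 : Real.sqrt (2 * (m * V * c₀) * x) = v * β := by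
      rw [hβdef, show 2 * ((m:ℝ) * V * c₀) * x = v ^ 2 * (2 * x / v) by
        field_simp; ring]
      rw [Real.sqrt_mul (sq_nonneg _), Real.sqrt_sq hvpos.le]
    have hEb : E ≤ 1 + lam * c₀ + (lam * c₀) ^ 2 / (2 * (1 - lam * c₀ / 3)) := by
      rw [hEdef]
      exact exp_bound3 (by positivity) hlamc
    have hkey : m * (V / c₀ * (E - 1)) - lam * ε ≤ -x := by
      have h5 : m * (V / c₀ * (E - 1)) ≤
          m * (V / c₀ * (lam * c₀ + (lam * c₀) ^ 2 / (2 * (1 - lam * c₀ / 3)))) := by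
        apply mul_le_mul_of_nonneg_left _ (by positivity : (0:ℝ) ≤ m)
        apply mul_le_mul_of_nonneg_left _ (by positivity : (0:ℝ) ≤ V / c₀)
        linarith
      have hvβ : v * β ^ 2 = 2 * x := by
        rw [hβsq]
        field_simp
      have h6 : m * (V / c₀ * (lam * c₀ + (lam * c₀) ^ 2 / (2 * (1 - lam * c₀ / 3))))
          - lam * ε = -x := by
        have hx2 : x = v * β ^ 2 / 2 := by linarith
        rw [h1mlam, hεdef, hsqrt2, hlamdef, hx2, hvdef, hDdef]
        field_simp
        ring
      linarith
    have htoReal : (P {ω | ε ≤ S ω}).toReal ≤ Real.exp (-x) := by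
      calc (P {ω | ε ≤ S ω}).toReal ≤ Real.exp (-lam * ε) * mgf S P lam := hch
        _ ≤ Real.exp (-lam * ε) * Real.exp (V / c₀ * (E - 1)) ^ m := by
            apply mul_le_mul_of_nonneg_left _ (Real.exp_pos _).le
            rw [hmgfS]
            exact pow_le_pow_left₀ mgf_nonneg hmgf2 m
        _ = Real.exp (-lam * ε + m * (V / c₀ * (E - 1))) := by
            rw [← Real.exp_nat_mul, ← Real.exp_add]
        _ ≤ Real.exp (-x) := Real.exp_le_exp.2 (by linarith [hkey])
    rw [← ENNReal.ofReal_toReal (measure_ne_top P _)]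
    exact ENNReal.ofReal_le_ofReal htoReal
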